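/- Let W be a finite Coxeter group with reflections T, and suppose A ⊆ T is nice. Then the Z-module D_A(W) = ⊕_{I A-admissible} Z·d_I^A, where d_I^A = Σ_{w : D_A(w) = I} w in the group ring ZW, is closed under multiplication, i.e., is a subalgebra of ZW. Moreover, it contains the identity 1 if and only if S ⊆ A. -/

import Mathlib

namespace Stmt15
open CoxeterSystem List
open scoped Classical

variable {B W : Type*} [Group W] {M : CoxeterMatrix B} (cs : CoxeterSystem M W)

local prefix:100 "σ" => cs.simple
local prefix:100 "π" => cs.wordProd

lemma two_zmod2 : (1 : ZMod 2) + 1 = 0 := by decide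

lemma zmod2_add_self (x : ZMod 2) : x + x = 0 := by
  fin_cases x <;> decide

noncomputable def toggleFun (i : B) : W × ZMod 2 → W × ZMod 2 :=
  fun q => (σ i * q.1 * σ i, q.2 + if q.1 = σ i then 1 else 0)

lemma simple_conj_simple (i : B) (w : W) : σ i * (σ i * w * σ i) * σ i = w := by
  have h1 : σ i * (σ i * w * σ i) * σ i = (σ i * σ i) * w * (σ i * σ i) := by group
  rw [h1, cs.simple_mul_simple_self]; group

lemma simple_conj_eq_iff (i : B) (w : W) : σ i * w * σ i = σ i ↔ w = σ i := by
  constructor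
  · intro h
    have h2 := congrArg (fun x => σ i * x * σ i) h
    rw [simple_conj_simple] at h2
    rw [h2, cs.simple_mul_simple_self, one_mul]
  · rintro rfl
    rw [cs.simple_mul_simple_self, one_mul]

lemma toggleFun_involutive (i : B) : Function.Involutive (toggleFun cs i) := by
  intro q
  unfold toggleFun
  refine Prod.ext (simple_conj_simple cs i q.1) ?_
  simp only [simple_conj_eq_iff]
  by_cases hq : q.1 = σ i
  · simp [hq, add_assoc, two_zmod2]
  · simp [hq]

noncomputable def eta (i : B) : Equiv.Perm (W × ZMod 2) :=
  (toggleFun_involutive cs i).toPerm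

lemma eta_apply (i : B) (q : W × ZMod 2) :
    eta cs i q = (σ i * q.1 * σ i, q.2 + if q.1 = σ i then 1 else 0) := rfl



section Lift
variable {B W : Type*} [Group W] {M : CoxeterMatrix B} (cs : CoxeterSystem M W)
local prefix:100 "σ" => cs.simple
local prefix:100 "π" => cs.wordProd

lemma eta_mul_eta_pow (i j : B) (k : ℕ) (q : W × ZMod 2) :
    ((eta cs i * eta cs j) ^ k) q =
      ((σ i * σ j) ^ k * q.1 * ((σ i * σ j) ^ k)⁻¹,
        q.2 + ∑ r ∈ Finset.range k,
          ((if q.1 = ((σ i * σ j) ^ r)⁻¹ * σ j * (σ i * σ j) ^ r then 1 else 0)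
          + (if q.1 = ((σ i * σ j) ^ r)⁻¹ * (σ j * σ i * σ j) * (σ i * σ j) ^ r then 1 else 0))) := by
  have hss : σ j * σ i = (σ i * σ j)⁻¹ := by
    rw [mul_inv_rev, cs.inv_simple, cs.inv_simple]
  induction k with
  | zero => simp
  | succ k ih =>
    rw [pow_succ', Equiv.Perm.mul_apply, ih]
    set p := σ i * σ j with hp
    rw [Equiv.Perm.mul_apply, eta_apply, eta_apply]
    simp only
    refine Prod.ext ?_ ?_
    · show σ i * (σ j * (p ^ k * q.1 * (p ^ k)⁻¹) * σ j) * σ i = p ^ (k+1) * q.1 * (p ^ (k+1))⁻¹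
      have h2 : σ i * (σ j * (p ^ k * q.1 * (p ^ k)⁻¹) * σ j) * σ i
          = (σ i * σ j) * (p ^ k * q.1 * (p ^ k)⁻¹) * (σ j * σ i) := by group
      rw [h2, hss, ← hp, pow_succ]
      group
    · dsimp only
      have hiff2 : (p ^ k * q.1 * (p ^ k)⁻¹ = σ j) ↔ q.1 = (p ^ k)⁻¹ * σ j * p ^ k := by
        constructor
        · intro h; rw [← h]; group
        · intro h; rw [h]; group
      have hiff1 : (σ j * (p ^ k * q.1 * (p ^ k)⁻¹) * σ j = σ i)
          ↔ q.1 = (p ^ k)⁻¹ * (σ j * σ i * σ j) * p ^ k := by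
        constructor
        · intro h
          have h2 := congrArg (fun x => (p ^ k)⁻¹ * (σ j * x * σ j) * p ^ k) h
          rw [simple_conj_simple] at h2
          rw [← h2]; group
        · intro h
          rw [h]
          have h3 : p ^ k * ((p ^ k)⁻¹ * (σ j * σ i * σ j) * p ^ k) * (p ^ k)⁻¹
              = σ j * σ i * σ j := by group
          rw [h3]
          exact simple_conj_simple cs j (σ i)
      rw [if_congr hiff2 rfl rfl, if_congr hiff1 rfl rfl, Finset.sum_range_succ]
      ring

lemma sum_range_two_mul {M : Type*} [AddCommMonoid M] (m : ℕ) (f : ℕ → M) :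
    ∑ n ∈ Finset.range (2 * m), f n = ∑ r ∈ Finset.range m, (f (2 * r) + f (2 * r + 1)) := by
  induction m with
  | zero => simp
  | succ m ih =>
    rw [Finset.sum_range_succ, ← ih, Nat.mul_succ, Finset.sum_range_succ, Finset.sum_range_succ,
      add_assoc]

  end Lift

section Lift2
variable {B W : Type*} [Group W] {M : CoxeterMatrix B} (cs : CoxeterSystem M W)
local prefix:100 "σ" => cs.simple

lemma eta_liftable : M.IsLiftable (eta cs) := by
  intro i j
  refine Equiv.ext fun q => ?_
  rw [eta_mul_eta_pow]
  set p := σ i * σ j with hp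
  set m := M.M i j with hm
  have hpm : p ^ m = 1 := cs.simple_mul_simple_pow i j
  have h1 : p⁻¹ * σ i = σ i * p := by
    rw [hp, mul_inv_rev, cs.inv_simple, cs.inv_simple, mul_assoc, cs.simple_mul_simple_self,
      mul_one, cs.simple_mul_simple_cancel_left]
  have hinv : ∀ r : ℕ, (p ^ r)⁻¹ * σ i = σ i * p ^ r := by
    intro r
    induction r with
    | zero => simp
    | succ r ih =>
      rw [pow_succ, mul_inv_rev, mul_assoc, ih, ← mul_assoc, h1, mul_assoc, ← pow_succ',
        pow_succ]
  have hconj : ∀ (x : W) (r : ℕ), (p ^ r)⁻¹ * (σ i * x) * p ^ r = σ i * (p ^ r * x * p ^ r) := by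
    intro x r
    rw [← mul_assoc, hinv r]
    group
  have hj : σ j = σ i * p := by rw [hp, cs.simple_mul_simple_cancel_left]
  have hb : σ j * σ i * σ j = σ i * p ^ 2 := by
    rw [sq, hp, ← mul_assoc, cs.simple_mul_simple_cancel_left, ← mul_assoc]
  have e1 : ∀ r : ℕ, (p ^ r)⁻¹ * σ j * p ^ r = σ i * p ^ (2 * r + 1) := by
    intro r
    rw [hj, hconj]
    congr 1
    have h2 : p ^ r * p * p ^ r = p ^ (r + 1 + r) := by
      rw [pow_add, pow_add, pow_one]
    rw [h2]
    congr 1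
    omega
  have e2 : ∀ r : ℕ, (p ^ r)⁻¹ * (σ j * σ i * σ j) * p ^ r = σ i * p ^ (2 * r + 2) := by
    intro r
    rw [hb, hconj]
    congr 1
    have h2 : p ^ r * p ^ 2 * p ^ r = p ^ (r + 2 + r) := by
      rw [pow_add, pow_add]
    rw [h2]
    congr 1
    omega
  have hsign : ∑ r ∈ Finset.range m,
      ((if q.1 = (p ^ r)⁻¹ * σ j * p ^ r then (1 : ZMod 2) else 0)
      + (if q.1 = (p ^ r)⁻¹ * (σ j * σ i * σ j) * p ^ r then 1 else 0)) = 0 := by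
    set g : ℕ → ZMod 2 := fun n => if q.1 = σ i * p ^ (n + 1) then 1 else 0 with hg
    have step1 : ∀ r ∈ Finset.range m,
        ((if q.1 = (p ^ r)⁻¹ * σ j * p ^ r then (1 : ZMod 2) else 0)
        + (if q.1 = (p ^ r)⁻¹ * (σ j * σ i * σ j) * p ^ r then 1 else 0))
        = g (2 * r) + g (2 * r + 1) := by
      intro r _
      rw [if_congr (iff_of_eq (congrArg _ (e1 r))) rfl rfl,
        if_congr (iff_of_eq (congrArg _ (e2 r))) rfl rfl]
    rw [Finset.sum_congr rfl step1, ← sum_range_two_mul m g, two_mul, Finset.sum_range_add]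
    have hper : ∀ x : ℕ, g (m + x) = g x := by
      intro x
      simp only [hg]
      have h3 : p ^ (m + x + 1) = p ^ (x + 1) := by
        have h4 : m + x + 1 = m + (x + 1) := by omega
        rw [h4, pow_add, hpm, one_mul]
      rw [h3]
    rw [Finset.sum_congr rfl (fun x _ => hper x), ← Finset.sum_add_distrib]
    rw [Finset.sum_congr rfl (fun x _ => zmod2_add_self (g x)), Finset.sum_const_zero]
  rw [hsign, add_zero, hpm]
  have hq : (1 : Equiv.Perm (W × ZMod 2)) q = q := rfl
  rw [hq]
  refine Prod.ext ?_ ?_ <;> simp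

noncomputable def phi : W →* Equiv.Perm (W × ZMod 2) := cs.lift ⟨eta cs, eta_liftable cs⟩

lemma phi_simple (i : B) : phi cs (σ i) = eta cs i := cs.lift_apply_simple (eta_liftable cs) i
  end Lift2

section Sgn
variable {B W : Type*} [Group W] {M : CoxeterMatrix B} (cs : CoxeterSystem M W)
local prefix:100 "σ" => cs.simple
local prefix:100 "π" => cs.wordProd
local prefix:100 "ℓ" => cs.length

lemma phi_fst (g : W) (q : W × ZMod 2) : (phi cs g q).1 = g * q.1 * g⁻¹ := by
  induction g using cs.simple_induction_left generalizing q with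
  | one => simp
  | mul_simple_left w i ih =>
    rw [map_mul, Equiv.Perm.mul_apply, phi_simple, eta_apply]
    simp only
    rw [ih]
    rw [mul_inv_rev, cs.inv_simple]
    group

lemma phi_snd (g : W) (q : W × ZMod 2) : (phi cs g q).2 = q.2 + (phi cs g (q.1, 0)).2 := by
  induction g using cs.simple_induction_left generalizing q with
  | one => simp
  | mul_simple_left w i ih =>
    rw [map_mul, Equiv.Perm.mul_apply, Equiv.Perm.mul_apply, phi_simple, eta_apply, eta_apply]
    simp only
    rw [ih]
    conv_rhs => rw [ih (q := (q.1, 0))]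
    have hfst : (phi cs w q).1 = (phi cs w (q.1, 0)).1 := by
      rw [phi_fst, phi_fst]
    rw [hfst]
    ring

/-- The sign of `t` under the permutation `phi g`. -/
noncomputable def sgn (g t : W) : ZMod 2 := (phi cs g (t, 0)).2

lemma phi_pair (g : W) (q : W × ZMod 2) : phi cs g q = (g * q.1 * g⁻¹, q.2 + sgn cs g q.1) := by
  refine Prod.ext (phi_fst cs g q) (phi_snd cs g q)

lemma sgn_wordProd (ω : List B) (t : W) :
    sgn cs (π ω) t = ((cs.rightInvSeq ω).count t : ZMod 2) := by
  induction ω generalizing t with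
  | nil => simp [sgn, CoxeterSystem.wordProd_nil]
  | cons i ω ih =>
    rw [CoxeterSystem.wordProd_cons]
    unfold sgn
    rw [map_mul, Equiv.Perm.mul_apply, phi_simple, eta_apply]
    simp only
    rw [phi_pair]
    simp only
    have hhead : cs.rightInvSeq (i :: ω) = ((π ω)⁻¹ * σ i * π ω) :: cs.rightInvSeq ω := rfl
    rw [hhead, List.count_cons]
    have hiff : (π ω * t * (π ω)⁻¹ = σ i) ↔ ((π ω)⁻¹ * σ i * π ω = t) := by
      constructor
      · intro h; rw [← h]; group
      · intro h; rw [← h]; group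
    rw [if_congr hiff rfl rfl]
    push_cast
    rw [← ih t]
    unfold sgn
    rw [zero_add]
    by_cases hc : (π ω)⁻¹ * σ i * π ω = t <;> simp [hc] <;> ring

lemma sgn_reflection {t : W} (ht : cs.IsReflection t) : sgn cs t t = 1 := by
  obtain ⟨v, i, rfl⟩ := ht
  set t := v * σ i * v⁻¹ with hT
  have h1 : phi cs v⁻¹ (t, 0) = (σ i, sgn cs v⁻¹ t) := by
    rw [phi_pair]
    refine Prod.ext ?_ (by simp)
    simp only [hT]
    group
  have h2 : phi cs v (σ i, sgn cs v⁻¹ t) = (t, 0) := by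
    rw [← h1, ← Equiv.Perm.mul_apply, ← map_mul, mul_inv_cancel, map_one, Equiv.Perm.one_apply]
  have h3 : sgn cs v⁻¹ t + sgn cs v (σ i) = 0 := by
    have := phi_pair cs v (σ i, sgn cs v⁻¹ t)
    rw [h2] at this
    have h4 := congrArg Prod.snd this
    simp only at h4
    exact h4.symm
  unfold sgn
  rw [hT, map_mul, map_mul, Equiv.Perm.mul_apply, Equiv.Perm.mul_apply]
  rw [← hT, h1, phi_simple, eta_apply]
  simp only [if_pos rfl]
  rw [phi_pair]
  simp only
  have h5 : σ i * σ i * σ i = σ i := by rw [cs.simple_mul_simple_self, one_mul]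
  rw [h5, if_pos trivial]
  linear_combination h3
  end Sgn

section Mem
variable {B W : Type*} [Group W] {M : CoxeterMatrix B} (cs : CoxeterSystem M W)
local prefix:100 "σ" => cs.simple
local prefix:100 "π" => cs.wordProd
local prefix:100 "ℓ" => cs.length

lemma rightInvSeq_append (ω₁ ω₂ : List B) :
    cs.rightInvSeq (ω₁ ++ ω₂)
      = (cs.rightInvSeq ω₁).map (fun t => (π ω₂)⁻¹ * t * π ω₂) ++ cs.rightInvSeq ω₂ := by
  induction ω₁ with
  | nil => rfl
  | cons i ω₁ ih =>
    have hcons : ∀ (δ : List B) (j : B),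
        cs.rightInvSeq (j :: δ) = ((π δ)⁻¹ * σ j * π δ) :: cs.rightInvSeq δ :=
      fun _ _ => rfl
    rw [List.cons_append, hcons, hcons, List.map_cons, ih, List.cons_append]
    congr 1
    rw [CoxeterSystem.wordProd_append, mul_inv_rev]
    group

/-- Key lemma: any reflection `t` with `ℓ(w t) < ℓ(w)` appears in the right inversion
sequence of any word for `w`. -/
lemma mem_rightInvSeq_of_isRightInversion {ω : List B} {t : W} (ht : cs.IsReflection t)
    (hlt : ℓ (π ω * t) < ℓ (π ω)) : t ∈ cs.rightInvSeq ω := by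
  set w := π ω with hw
  obtain ⟨α, hα, hαw⟩ := cs.exists_reduced_word' (w * t)
  obtain ⟨γ, hγred, hγ⟩ := cs.exists_reduced_word' t
  have hcat : π (α ++ γ) = w := by
    rw [CoxeterSystem.wordProd_append, ← hαw, ← hγ, mul_assoc, ht.mul_self, mul_one]
  have h1 : sgn cs w t = ((cs.rightInvSeq (α ++ γ)).count t : ZMod 2) := by
    rw [← hcat]; exact sgn_wordProd cs (α ++ γ) t
  have hconj : (π γ)⁻¹ * t * π γ = t := by
    rw [← hγ, inv_mul_cancel, one_mul]
  have hinj : Function.Injective (fun x : W => (π γ)⁻¹ * x * π γ) := by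
    intro a b hab
    simp only at hab
    exact mul_left_cancel (mul_right_cancel hab)
  have h2 : ((cs.rightInvSeq α).map (fun x => (π γ)⁻¹ * x * π γ)).count t
      = (cs.rightInvSeq α).count t := by
    have h := List.count_map_of_injective (cs.rightInvSeq α)
      (fun x : W => (π γ)⁻¹ * x * π γ) hinj t
    rw [hconj] at h
    exact h
  have h3 : (cs.rightInvSeq α).count t = 0 := by
    rw [List.count_eq_zero]
    intro hmem
    have h5 := (cs.isRightInversion_of_mem_rightInvSeq hα hmem).2
    rw [← hαw, mul_assoc, ht.mul_self, mul_one] at h5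
    omega
  have h7 : sgn cs t t = ((cs.rightInvSeq γ).count t : ZMod 2) := by
    rw [← sgn_wordProd cs γ t, hγ]
  have h6 : sgn cs w t = 1 := by
    rw [h1, rightInvSeq_append, List.count_append, h2, h3]
    push_cast
    rw [zero_add, ← h7, sgn_reflection cs ht]
  rw [sgn_wordProd cs ω t] at h6
  by_contra hmem
  rw [List.count_eq_zero_of_not_mem hmem] at h6
  exact absurd h6 (by decide)
  end Mem

section DSet
variable {B W : Type*} [Group W] {M : CoxeterMatrix B} (cs : CoxeterSystem M W) (A : Set W)
local prefix:100 "σ" => cs.simple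
local prefix:100 "π" => cs.wordProd
local prefix:100 "ℓ" => cs.length

/-- The `A`-descent set of `w`. -/
def DA (w : W) : Set W := {t ∈ A | ℓ (w * t) < ℓ w}

lemma mem_DA {w t : W} : t ∈ DA cs A w ↔ t ∈ A ∧ ℓ (w * t) < ℓ w := Iff.rfl

variable {A}
variable (hA : ∀ t ∈ A, cs.IsReflection t)
include hA

lemma DA_simple_mul_of_lt (i : B) (p : W) (h : ℓ p < ℓ (σ i * p)) :
    DA cs A (σ i * p) = symmDiff (DA cs A p) ({p⁻¹ * σ i * p} ∩ A) := by
  obtain ⟨ω, hred, rfl⟩ := cs.exists_reduced_word p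
  have hlen := hred.eq
  have hlen2 : ℓ (σ i * π ω) = ω.length + 1 := by
    rcases cs.length_simple_mul (π ω) i with h' | h' <;> omega
  have hredi : cs.IsReduced (i :: ω) := by
    show ℓ (π (i :: ω)) = (i :: ω).length
    rw [CoxeterSystem.wordProd_cons, hlen2, List.length_cons]
  have hris : cs.rightInvSeq (i :: ω) = ((π ω)⁻¹ * σ i * π ω) :: cs.rightInvSeq ω := rfl
  have hpq : π ω * ((π ω)⁻¹ * σ i * π ω) = σ i * π ω := by group
  have hpq2 : σ i * π ω * ((π ω)⁻¹ * σ i * π ω) = π ω := by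
    have h9 : σ i * π ω * ((π ω)⁻¹ * σ i * π ω) = σ i * (σ i * π ω) := by group
    rw [h9, cs.simple_mul_simple_cancel_left]
  ext t
  rw [mem_DA, Set.mem_symmDiff]
  constructor
  · rintro ⟨htA, hlt⟩
    have ht := hA t htA
    have hmem : t ∈ cs.rightInvSeq (i :: ω) := by
      apply mem_rightInvSeq_of_isRightInversion cs ht
      rwa [CoxeterSystem.wordProd_cons]
    rw [hris, List.mem_cons] at hmem
    rcases hmem with rfl | hmem
    · right
      refine ⟨⟨rfl, htA⟩, ?_⟩
      rintro ⟨-, hlt2⟩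
      rw [hpq] at hlt2
      omega
    · left
      have hinv := cs.isRightInversion_of_mem_rightInvSeq hred hmem
      refine ⟨⟨htA, hinv.2⟩, ?_⟩
      rintro ⟨rfl, -⟩
      have := hinv.2
      rw [hpq] at this
      omega
  · rintro (⟨⟨htA, hlt⟩, hnot⟩ | ⟨⟨rfl, htA⟩, -⟩)
    · refine ⟨htA, ?_⟩
      have ht := hA t htA
      have hmem : t ∈ cs.rightInvSeq ω := mem_rightInvSeq_of_isRightInversion cs ht hlt
      have hmem2 : t ∈ cs.rightInvSeq (i :: ω) := by rw [hris]; exact List.mem_cons_of_mem _ hmem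
      have hinv := cs.isRightInversion_of_mem_rightInvSeq hredi hmem2
      rw [CoxeterSystem.wordProd_cons] at hinv
      exact hinv.2
    · refine ⟨htA, ?_⟩
      rw [hpq2]
      exact h

lemma DA_simple_mul (i : B) (p : W) :
    DA cs A (σ i * p) = symmDiff (DA cs A p) ({p⁻¹ * σ i * p} ∩ A) := by
  rcases lt_or_gt_of_ne (cs.length_simple_mul_ne p i).symm with h | h
  · exact DA_simple_mul_of_lt cs hA i p h
  · have h2 := DA_simple_mul_of_lt cs hA i (σ i * p)
      (by rwa [← mul_assoc, cs.simple_mul_simple_self, one_mul])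
    rw [← mul_assoc, cs.simple_mul_simple_self, one_mul] at h2
    have h3 : (σ i * p)⁻¹ * σ i * (σ i * p) = p⁻¹ * σ i * p := by
      rw [mul_inv_rev, cs.inv_simple]
      have : p⁻¹ * σ i * (σ i * (σ i * p)) = p⁻¹ * σ i * p := by
        rw [cs.simple_mul_simple_cancel_left]
      rw [← this]
      group
    rw [h3] at h2
    rw [h2, symmDiff_symmDiff_cancel_right]

lemma DA_wordProd_mul {ω : List B} (hred : cs.IsReduced ω) (w : W) :
    DA cs A (π ω * w)
      = symmDiff (DA cs A w) (((fun t => w⁻¹ * t * w) '' {t | t ∈ cs.rightInvSeq ω}) ∩ A) := by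
  induction ω with
  | nil =>
    simp only [CoxeterSystem.wordProd_nil, one_mul]
    have : {t : W | t ∈ cs.rightInvSeq ([] : List B)} = ∅ := by simp [CoxeterSystem.rightInvSeq]
    rw [this]
    have h0 : ((fun t => w⁻¹ * t * w) '' (∅ : Set W)) ∩ A = ⊥ := by simp
    rw [h0, symmDiff_bot]
  | cons i ω ih =>
    have hredt : cs.IsReduced ω := by
      have h1 : ℓ (π (i :: ω)) = ω.length + 1 := by rw [hred, List.length_cons]
      rw [CoxeterSystem.wordProd_cons] at h1
      have h2 := cs.length_wordProd_le ω
      show ℓ (π ω) = ω.length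
      rcases cs.length_simple_mul (π ω) i with h' | h' <;> omega
    have hq : (π (i :: ω) * w) = σ i * (π ω * w) := by
      rw [CoxeterSystem.wordProd_cons, mul_assoc]
    rw [hq, DA_simple_mul cs hA i (π ω * w), ih hredt]
    rw [symmDiff_assoc]
    congr 1
    have hy : (π ω * w)⁻¹ * σ i * (π ω * w) = w⁻¹ * ((π ω)⁻¹ * σ i * π ω) * w := by
      rw [mul_inv_rev]; group
    have hris : cs.rightInvSeq (i :: ω) = ((π ω)⁻¹ * σ i * π ω) :: cs.rightInvSeq ω := rfl
    have hnodup := hred.nodup_rightInvSeq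
    rw [hris, List.nodup_cons] at hnodup
    set q := (π ω)⁻¹ * σ i * π ω with hqdef
    have hset : {t : W | t ∈ cs.rightInvSeq (i :: ω)} = insert q {t | t ∈ cs.rightInvSeq ω} := by
      ext u; rw [hris]; simp [List.mem_cons]
    rw [hset, Set.image_insert_eq, hy]
    have hyni : w⁻¹ * q * w ∉ (fun t => w⁻¹ * t * w) '' {t | t ∈ cs.rightInvSeq ω} := by
      rintro ⟨u, hu, hequ⟩
      have : u = q := by
        have := congrArg (fun x => w * x * w⁻¹) hequ
        simp only at this
        group at this
        convert this using 1 <;> group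
      exact hnodup.1 (this ▸ hu)
    ext u
    rw [Set.mem_symmDiff]
    simp only [Set.mem_inter_iff, Set.mem_singleton_iff, Set.mem_insert_iff]
    by_cases hu : u = w⁻¹ * q * w
    · subst hu
      constructor
      · rintro (⟨⟨h1, h2⟩, h3⟩ | ⟨⟨-, h2⟩, h3⟩)
        · exact absurd h1 hyni
        · exact ⟨Or.inl rfl, h2⟩
      · rintro ⟨-, h2⟩
        exact Or.inr ⟨⟨rfl, h2⟩, fun hc => hyni hc.1⟩
    · constructor
      · rintro (⟨⟨h1, h2⟩, -⟩ | ⟨⟨h1, -⟩, -⟩)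
        · exact ⟨Or.inr h1, h2⟩
        · exact absurd h1 hu
      · rintro ⟨h1, h2⟩
        rcases h1 with h1 | h1
        · exact absurd h1 hu
        · exact Or.inl ⟨⟨h1, h2⟩, fun hc => hu hc.1⟩
  end DSet

section Counting
variable {B W : Type*} [Group W] [Fintype W] {M : CoxeterMatrix B} (cs : CoxeterSystem M W)
local prefix:100 "σ" => cs.simple
local prefix:100 "π" => cs.wordProd
local prefix:100 "ℓ" => cs.length

variable {A : Set W}

/-- Criterion: if left-multiplying by `π ω` preserves the `A`-descent set, then no conjugate
`w⁻¹ t w` of an inversion `t ∈ ris ω` lies in `A`. -/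
lemma conj_notin_A_of_DA_eq (hA : ∀ t ∈ A, cs.IsReflection t) {ω : List B}
    (hred : cs.IsReduced ω) (w : W) (h : DA cs A (π ω * w) = DA cs A w) :
    ∀ t ∈ cs.rightInvSeq ω, w⁻¹ * t * w ∉ A := by
  have hf := DA_wordProd_mul cs hA hred w
  rw [h] at hf
  have hbot : ((fun t => w⁻¹ * t * w) '' {t | t ∈ cs.rightInvSeq ω}) ∩ A = ⊥ :=
    symmDiff_eq_left.mp hf.symm
  intro t ht hin
  have : w⁻¹ * t * w ∈ ((fun t => w⁻¹ * t * w) '' {t | t ∈ cs.rightInvSeq ω}) ∩ A :=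
    ⟨⟨t, ht, rfl⟩, hin⟩
  rw [hbot] at this
  exact this

open scoped Classical in
/-- The set of factorizations of `w` with prescribed descent types. -/
noncomputable def pairsIJ (A : Set W) (I J : Set W) (w : W) : Finset (W × W) :=
  Finset.univ.filter (fun pq : W × W =>
    DA cs A pq.1 = I ∧ DA cs A pq.2 = J ∧ pq.1 * pq.2 = w)

/-- One-move invariance of factorization counts. -/
lemma pairsIJ_card_simple_mul (hA : ∀ t ∈ A, cs.IsReflection t)
    (hnice : ∀ r ∈ A, ∀ q : W, q⁻¹ * r * q ∉ A → DA cs A (r * q) = DA cs A q)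
    (i : B) (w : W) (hw : w⁻¹ * σ i * w ∉ A) (I J : Set W) :
    (pairsIJ cs A I J (σ i * w)).card = (pairsIJ cs A I J w).card := by
  classical
  set Φ : W × W → W × W := fun pq =>
    if pq.1⁻¹ * σ i * pq.1 ∉ A then (σ i * pq.1, pq.2)
    else (pq.1, (pq.1⁻¹ * σ i * pq.1) * pq.2) with hΦ
  have hmaps : ∀ v : W, v⁻¹ * σ i * v ∉ A →
      ∀ pq ∈ pairsIJ cs A I J v, Φ pq ∈ pairsIJ cs A I J (σ i * v) := by
    intro v hv pq hpq
    simp only [pairsIJ, Finset.mem_filter, Finset.mem_univ, true_and] at hpq ⊢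
    obtain ⟨hp, hq, hmul⟩ := hpq
    by_cases hc : pq.1⁻¹ * σ i * pq.1 ∉ A
    · rw [hΦ]
      simp only [if_pos hc]
      refine ⟨?_, hq, by rw [mul_assoc, hmul]⟩
      rw [DA_simple_mul cs hA i pq.1, ← hp]
      have : {pq.1⁻¹ * σ i * pq.1} ∩ A = (⊥ : Set W) := by
        rw [Set.bot_eq_empty, Set.eq_empty_iff_forall_notMem]
        rintro u ⟨rfl, huA⟩
        exact hc huA
      rw [this, symmDiff_bot]
    · rw [hΦ]
      simp only [if_neg hc]
      push_neg at hc
      refine ⟨hp, ?_, ?_⟩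
      · rw [hnice _ hc pq.2 ?_, hq]
        have : pq.2⁻¹ * (pq.1⁻¹ * σ i * pq.1) * pq.2 = v⁻¹ * σ i * v := by
          rw [← hmul]; group
        rw [this]
        exact hv
      · have : pq.1 * (pq.1⁻¹ * σ i * pq.1 * pq.2) = σ i * (pq.1 * pq.2) := by group
        rw [this, hmul]
  have hinvol : ∀ pq : W × W, Φ (Φ pq) = pq := by
    rintro ⟨p, q⟩
    by_cases hc : p⁻¹ * σ i * p ∉ A
    · have h1 : Φ (p, q) = (σ i * p, q) := by rw [hΦ]; exact if_pos hc
      rw [h1]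
      have h2 : (σ i * p)⁻¹ * σ i * (σ i * p) = p⁻¹ * σ i * p := by
        rw [mul_inv_rev, cs.inv_simple]
        have h2a : p⁻¹ * σ i * (σ i * (σ i * p)) = p⁻¹ * σ i * p := by
          rw [cs.simple_mul_simple_cancel_left]
        rw [← h2a]; group
      have h1b : Φ (σ i * p, q) = (σ i * (σ i * p), q) := by
        rw [hΦ]
        show (if (σ i * p)⁻¹ * σ i * (σ i * p) ∉ A then (σ i * (σ i * p), q)
          else ((σ i * p), ((σ i * p)⁻¹ * σ i * (σ i * p)) * q)) = _
        rw [h2]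
        exact if_pos hc
      rw [h1b, cs.simple_mul_simple_cancel_left]
    · have h1 : Φ (p, q) = (p, (p⁻¹ * σ i * p) * q) := by rw [hΦ]; exact if_neg hc
      rw [h1]
      have h1b : Φ (p, (p⁻¹ * σ i * p) * q) = (p, (p⁻¹ * σ i * p) * ((p⁻¹ * σ i * p) * q)) := by
        rw [hΦ]; exact if_neg hc
      rw [h1b]
      have h3 : p⁻¹ * σ i * p * (p⁻¹ * σ i * p * q) = q := by
        have h3a : p⁻¹ * σ i * p * (p⁻¹ * σ i * p * q)
            = p⁻¹ * (σ i * (σ i * p)) * q := by group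
        rw [h3a, cs.simple_mul_simple_cancel_left]
        group
      rw [h3]
  refine Finset.card_bij' (fun pq _ => Φ pq) (fun pq _ => Φ pq) ?_ ?_ ?_ ?_
  · intro pq hpq
    have h4 : (σ i * w)⁻¹ * σ i * (σ i * w) = w⁻¹ * σ i * w := by
      rw [mul_inv_rev, cs.inv_simple]
      have : w⁻¹ * σ i * (σ i * (σ i * w)) = w⁻¹ * σ i * w := by
        rw [cs.simple_mul_simple_cancel_left]
      rw [← this]; group
    have h5 := hmaps (σ i * w) (by rw [h4]; exact hw) pq hpq
    rwa [cs.simple_mul_simple_cancel_left] at h5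
  · exact hmaps w hw
  · intro pq _; exact hinvol pq
  · intro pq _; exact hinvol pq
  end Counting

section Main
variable {B W : Type*} [Group W] [Fintype W] {M : CoxeterMatrix B} (cs : CoxeterSystem M W)
local prefix:100 "σ" => cs.simple
local prefix:100 "π" => cs.wordProd
local prefix:100 "ℓ" => cs.length

variable {A : Set W}

lemma pairsIJ_card_eq_of_DA_eq (hA : ∀ t ∈ A, cs.IsReflection t)
    (hnice : ∀ r ∈ A, ∀ q : W, q⁻¹ * r * q ∉ A → DA cs A (r * q) = DA cs A q)
    {w w' : W} (hD : DA cs A w' = DA cs A w) (I J : Set W) :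
    (pairsIJ cs A I J w').card = (pairsIJ cs A I J w).card := by
  have main : ∀ n : ℕ, ∀ u w : W, ℓ u = n → DA cs A (u * w) = DA cs A w →
      ∀ I J : Set W, (pairsIJ cs A I J (u * w)).card = (pairsIJ cs A I J w).card := by
    intro n
    induction n using Nat.strong_induction_on with
    | _ n ih =>
      intro u w hlen hD I J
      by_cases hu1 : u = 1
      · rw [hu1, one_mul]
      · obtain ⟨ω, hred, hω⟩ := cs.exists_reduced_word' u
        have hne : ω ≠ [] := by
          rintro rfl
          exact hu1 (by rw [hω, CoxeterSystem.wordProd_nil])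
        obtain ⟨ω', j, rfl⟩ := ω.eq_nil_or_concat.resolve_left hne
        rw [List.concat_eq_append] at hred hω
        have hrisj : cs.rightInvSeq [j] = [σ j] := by
          show ((π ([] : List B))⁻¹ * σ j * π ([] : List B)) :: _ = [σ j]
          rw [CoxeterSystem.wordProd_nil]
          simp
        have hsj : σ j ∈ cs.rightInvSeq (ω' ++ [j]) := by
          rw [rightInvSeq_append, hrisj]
          exact List.mem_append_right _ (List.mem_singleton_self _)
        have hDu : DA cs A (π (ω' ++ [j]) * w) = DA cs A w := by rw [← hω]; exact hD
        have hwA : w⁻¹ * σ j * w ∉ A :=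
          conj_notin_A_of_DA_eq cs hA hred w hDu _ hsj
        have hDsw : DA cs A (σ j * w) = DA cs A w := by
          rw [DA_simple_mul cs hA j w]
          have hb : {w⁻¹ * σ j * w} ∩ A = (⊥ : Set W) := by
            rw [Set.bot_eq_empty, Set.eq_empty_iff_forall_notMem]
            rintro x ⟨rfl, hxA⟩
            exact hwA hxA
          rw [hb, symmDiff_bot]
        have hu' : u = π ω' * σ j := by
          rw [hω, CoxeterSystem.wordProd_append]
          congr 1
          show π (j :: []) = σ j
          rw [CoxeterSystem.wordProd_cons, CoxeterSystem.wordProd_nil, mul_one]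
        have hlenu : (ω' ++ [j]).length = n := by
          have := hred
          unfold CoxeterSystem.IsReduced at this
          rw [← hω, hlen] at this
          omega
        have hlen' : ℓ (π ω') < n := by
          have h1 := cs.length_wordProd_le ω'
          have h2 : ω'.length + 1 = n := by
            rw [← hlenu, List.length_append, List.length_singleton]
          omega
        have hmul : π ω' * (σ j * w) = u * w := by rw [hu']; group
        have hD2 : DA cs A (π ω' * (σ j * w)) = DA cs A (σ j * w) := by
          rw [hmul, hD, hDsw]
        calc (pairsIJ cs A I J (u * w)).card
            = (pairsIJ cs A I J (π ω' * (σ j * w))).card := by rw [hmul]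
          _ = (pairsIJ cs A I J (σ j * w)).card :=
              ih (ℓ (π ω')) hlen' (π ω') (σ j * w) rfl hD2 I J
          _ = (pairsIJ cs A I J w).card :=
              pairsIJ_card_simple_mul cs hA hnice j w hwA I J
  have h := main (ℓ (w' * w⁻¹)) (w' * w⁻¹) w rfl (by rw [inv_mul_cancel_right]; exact hD) I J
  rwa [inv_mul_cancel_right] at h
  end Main

section Span
variable {B W : Type*} [Group W] [Fintype W] {M : CoxeterMatrix B} (cs : CoxeterSystem M W)
local prefix:100 "ℓ" => cs.length

open scoped Classical in
/-- The generating set of the generalized descent algebra. -/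
noncomputable def genSet (A : Set W) : Set (MonoidAlgebra ℤ W) :=
  {d : MonoidAlgebra ℤ W |
    ∃ I : Set W, (∃ w : W, DA cs A w = I) ∧
      d = ∑ w ∈ Finset.univ.filter (fun w : W => DA cs A w = I), MonoidAlgebra.of ℤ W w}

variable {A : Set W}

lemma fiber_const_mem_span (c : W → ℤ)
    (hc : ∀ v w : W, DA cs A v = DA cs A w → c v = c w) :
    (∑ w : W, c w • MonoidAlgebra.of ℤ W w) ∈ Submodule.span ℤ (genSet cs A) := by
  classical
  rw [← Finset.sum_fiberwise_of_maps_to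
    (g := DA cs A) (t := Finset.univ.image (DA cs A))
    (fun x _ => Finset.mem_image_of_mem _ (Finset.mem_univ x))
    (fun w => c w • MonoidAlgebra.of ℤ W w)]
  apply Submodule.sum_mem
  intro K hK
  obtain ⟨wK, -, hwK⟩ := Finset.mem_image.mp hK
  have hcongr : ∀ w ∈ Finset.univ.filter (fun w : W => DA cs A w = K),
      c w • MonoidAlgebra.of ℤ W w = c wK • MonoidAlgebra.of ℤ W w := by
    intro w hw
    rw [Finset.mem_filter] at hw
    rw [hc w wK (by rw [hw.2, hwK])]
  rw [Finset.sum_congr rfl hcongr, ← Finset.smul_sum]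
  refine Submodule.smul_mem _ _ (Submodule.subset_span ?_)
  exact ⟨K, ⟨wK, hwK⟩, rfl⟩

lemma d_mul_d_mem_span (hA : ∀ t ∈ A, cs.IsReflection t)
    (hnice : ∀ r ∈ A, ∀ q : W, q⁻¹ * r * q ∉ A → DA cs A (r * q) = DA cs A q)
    (I J : Set W) :
    (∑ p ∈ Finset.univ.filter (fun w : W => DA cs A w = I), MonoidAlgebra.of ℤ W p)
      * (∑ q ∈ Finset.univ.filter (fun w : W => DA cs A w = J), MonoidAlgebra.of ℤ W q)
      ∈ Submodule.span ℤ (genSet cs A) := by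
  classical
  set FI := Finset.univ.filter (fun w : W => DA cs A w = I) with hFI
  set FJ := Finset.univ.filter (fun w : W => DA cs A w = J) with hFJ
  rw [Finset.sum_mul_sum]
  have h1 : ∀ p q : W, (MonoidAlgebra.of ℤ W p) * (MonoidAlgebra.of ℤ W q)
      = MonoidAlgebra.of ℤ W (p * q) := fun p q => (map_mul _ _ _).symm
  rw [Finset.sum_congr rfl (fun p _ => Finset.sum_congr rfl (fun q _ => h1 p q))]
  rw [← Finset.sum_product']
  -- now group by the product value
  rw [← Finset.sum_fiberwise_of_maps_to
    (g := fun pq : W × W => pq.1 * pq.2) (t := (Finset.univ : Finset W))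
    (fun x _ => Finset.mem_univ _) (fun pq => MonoidAlgebra.of ℤ W (pq.1 * pq.2))]
  have h2 : ∀ w : W, ∑ pq ∈ (FI ×ˢ FJ).filter (fun pq : W × W => pq.1 * pq.2 = w),
      MonoidAlgebra.of ℤ W (pq.1 * pq.2)
      = ((pairsIJ cs A I J w).card : ℤ) • MonoidAlgebra.of ℤ W w := by
    intro w
    have h3 : ∀ pq ∈ (FI ×ˢ FJ).filter (fun pq : W × W => pq.1 * pq.2 = w),
        MonoidAlgebra.of ℤ W (pq.1 * pq.2) = MonoidAlgebra.of ℤ W w := by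
      intro pq hpq
      rw [Finset.mem_filter] at hpq
      rw [hpq.2]
    rw [Finset.sum_congr rfl h3, Finset.sum_const]
    have h4 : (FI ×ˢ FJ).filter (fun pq : W × W => pq.1 * pq.2 = w) = pairsIJ cs A I J w := by
      ext pq
      simp only [pairsIJ, Finset.mem_filter, Finset.mem_product, Finset.mem_univ, true_and,
        hFI, hFJ]
      tauto
    rw [h4, ← Nat.cast_smul_eq_nsmul ℤ]
  rw [Finset.sum_congr rfl (fun w _ => h2 w)]
  exact fiber_const_mem_span cs _
    (fun v w h => by
      norm_cast
      exact pairsIJ_card_eq_of_DA_eq cs hA hnice h I J)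
  end Span

section Conclusion
variable {B W : Type*} [Group W] [Fintype W] {M : CoxeterMatrix B} (cs : CoxeterSystem M W)
variable {A : Set W}

lemma DA_one : DA cs A 1 = (∅ : Set W) := by
  ext t
  simp only [mem_DA, one_mul, cs.length_one, Set.mem_empty_iff_false, iff_false, not_and]
  intro _
  omega

lemma DA_simple_of_not_mem {i : B} (hi : cs.simple i ∉ A) : DA cs A (cs.simple i) = ∅ := by
  ext t
  simp only [mem_DA, Set.mem_empty_iff_false, iff_false, not_and]
  intro htA hlt
  rw [cs.length_simple] at hlt
  have h0 : cs.length (cs.simple i * t) = 0 := by omega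
  rw [cs.length_eq_zero_iff] at h0
  have ht1 : t = cs.simple i := by
    have := congrArg (fun x => cs.simple i * x) h0
    simp only [mul_one] at this
    rw [← this, cs.simple_mul_simple_cancel_left]
  exact hi (ht1 ▸ htA)

lemma simple_ne_one' (i : B) : cs.simple i ≠ 1 := by
  intro h
  have h1 := cs.length_simple i
  rw [h, cs.length_one] at h1
  omega
  end Conclusion


end Stmt15



open scoped Classical in
/-- If `W` is a finite Coxeter group and `A ⊆ T` is nice, then the
`ℤ`-span of the elements `d_I^A = Σ_{D_A(w)=I} w` over all `A`-admissible `I` is closed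
under multiplication in `ℤW`, and it contains `1` iff `S ⊆ A`. -/
theorem descent_algebra_of_nice {B W : Type*} [Group W] [Fintype W] {M : CoxeterMatrix B}
    (cs : CoxeterSystem M W) (A : Set W) (hA : ∀ t ∈ A, cs.IsReflection t)
    (hnice : ∀ r ∈ A, ∀ w : W, w⁻¹ * r * w ∉ A →
      {t ∈ A | cs.length (r * w * t) < cs.length (r * w)} =
        {t ∈ A | cs.length (w * t) < cs.length w}) :
    (∀ x y : MonoidAlgebra ℤ W,
      x ∈ Submodule.span ℤ
        {d : MonoidAlgebra ℤ W |
          ∃ I : Set W, (∃ w : W, {t ∈ A | cs.length (w * t) < cs.length w} = I) ∧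
            d = ∑ w ∈ Finset.univ.filter
                (fun w : W => {t ∈ A | cs.length (w * t) < cs.length w} = I),
                MonoidAlgebra.of ℤ W w} →
      y ∈ Submodule.span ℤ
        {d : MonoidAlgebra ℤ W |
          ∃ I : Set W, (∃ w : W, {t ∈ A | cs.length (w * t) < cs.length w} = I) ∧
            d = ∑ w ∈ Finset.univ.filter
                (fun w : W => {t ∈ A | cs.length (w * t) < cs.length w} = I),
                MonoidAlgebra.of ℤ W w} →
      x * y ∈ Submodule.span ℤ
        {d : MonoidAlgebra ℤ W |
          ∃ I : Set W, (∃ w : W, {t ∈ A | cs.length (w * t) < cs.length w} = I) ∧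
            d = ∑ w ∈ Finset.univ.filter
                (fun w : W => {t ∈ A | cs.length (w * t) < cs.length w} = I),
                MonoidAlgebra.of ℤ W w}) ∧
    ((1 : MonoidAlgebra ℤ W) ∈ Submodule.span ℤ
        {d : MonoidAlgebra ℤ W |
          ∃ I : Set W, (∃ w : W, {t ∈ A | cs.length (w * t) < cs.length w} = I) ∧
            d = ∑ w ∈ Finset.univ.filter
                (fun w : W => {t ∈ A | cs.length (w * t) < cs.length w} = I),
                MonoidAlgebra.of ℤ W w} ↔
      Set.range cs.simple ⊆ A) := by
  classical
  have hgen : {d : MonoidAlgebra ℤ W |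
      ∃ I : Set W, (∃ w : W, {t ∈ A | cs.length (w * t) < cs.length w} = I) ∧
        d = ∑ w ∈ Finset.univ.filter
            (fun w : W => {t ∈ A | cs.length (w * t) < cs.length w} = I),
            MonoidAlgebra.of ℤ W w} = Stmt15.genSet cs A := rfl
  rw [hgen]
  have hnice' : ∀ r ∈ A, ∀ q : W, q⁻¹ * r * q ∉ A →
      Stmt15.DA cs A (r * q) = Stmt15.DA cs A q := hnice
  constructor
  · intro x y hx hy
    induction hx, hy using Submodule.span_induction₂ with
    | mem_mem x y hx hy =>
      obtain ⟨I, -, rfl⟩ := hx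
      obtain ⟨J, -, rfl⟩ := hy
      exact Stmt15.d_mul_d_mem_span cs hA hnice' I J
    | zero_left y hy => rw [zero_mul]; exact Submodule.zero_mem _
    | zero_right x hx => rw [mul_zero]; exact Submodule.zero_mem _
    | add_left x y z hx hy hz h1 h2 => rw [add_mul]; exact Submodule.add_mem _ h1 h2
    | add_right x y z hx hy hz h1 h2 => rw [mul_add]; exact Submodule.add_mem _ h1 h2
    | smul_left a x y hx hy h1 => rw [smul_mul_assoc]; exact Submodule.smul_mem _ _ h1
    | smul_right a x y hx hy h1 => rw [mul_smul_comm]; exact Submodule.smul_mem _ _ h1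
  · constructor
    · intro h1
      by_contra hS
      rw [Set.not_subset] at hS
      obtain ⟨x, ⟨i0, rfl⟩, hxA⟩ := hS
      set lam : MonoidAlgebra ℤ W →ₗ[ℤ] ℤ :=
        (Finsupp.lapply 1 - Finsupp.lapply (cs.simple i0)) ∘ₗ
          (MonoidAlgebra.coeffLinearEquiv ℤ).toLinearMap with hlam
      have hker : Submodule.span ℤ (Stmt15.genSet cs A) ≤ LinearMap.ker lam := by
        rw [Submodule.span_le]
        rintro d ⟨K, ⟨wK, hwK⟩, rfl⟩
        rw [SetLike.mem_coe, LinearMap.mem_ker, map_sum]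
        have hval : ∀ w : W, lam (MonoidAlgebra.of ℤ W w)
            = (if w = 1 then (1 : ℤ) else 0) - (if w = cs.simple i0 then 1 else 0) := by
          intro w
          have h0 : lam (MonoidAlgebra.of ℤ W w)
              = (Finsupp.single w (1 : ℤ)) 1 - (Finsupp.single w (1 : ℤ)) (cs.simple i0) := rfl
          rw [h0, Finsupp.single_apply, Finsupp.single_apply]
        rw [Finset.sum_congr rfl (fun w _ => hval w), Finset.sum_sub_distrib,
          Finset.sum_ite_eq', Finset.sum_ite_eq']
        have hD1 : Stmt15.DA cs A (1 : W) = Stmt15.DA cs A (cs.simple i0) := by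
          rw [Stmt15.DA_one, Stmt15.DA_simple_of_not_mem cs hxA]
        have hmem_iff : ((1 : W) ∈ Finset.univ.filter (fun w : W => Stmt15.DA cs A w = K))
            ↔ (cs.simple i0 ∈ Finset.univ.filter (fun w : W => Stmt15.DA cs A w = K)) := by
          simp only [Finset.mem_filter, Finset.mem_univ, true_and]
          rw [hD1]
        by_cases hm : (1 : W) ∈ Finset.univ.filter (fun w : W => Stmt15.DA cs A w = K)
        · rw [if_pos hm, if_pos (hmem_iff.mp hm), sub_self]
        · rw [if_neg hm, if_neg (fun hc => hm (hmem_iff.mpr hc)), sub_self]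
      have h2 := hker h1
      rw [LinearMap.mem_ker] at h2
      have h0 : lam (1 : MonoidAlgebra ℤ W)
          = (Finsupp.single (1 : W) (1 : ℤ)) 1 - (Finsupp.single (1 : W) (1 : ℤ)) (cs.simple i0) :=
        rfl
      rw [h0, Finsupp.single_apply, Finsupp.single_apply] at h2
      rw [if_pos rfl, if_neg (fun hc => Stmt15.simple_ne_one' cs i0 hc.symm)] at h2
      omega
    · intro hS
      apply Submodule.subset_span
      refine ⟨Stmt15.DA cs A 1, ⟨1, rfl⟩, ?_⟩
      have hfil : Finset.univ.filter (fun w : W => Stmt15.DA cs A w = Stmt15.DA cs A 1)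
          = {1} := by
        ext w
        simp only [Finset.mem_filter, Finset.mem_univ, true_and, Finset.mem_singleton]
        constructor
        · intro hw
          by_contra hw1
          obtain ⟨i, hi⟩ := cs.exists_rightDescent_of_ne_one hw1
          have hsi : cs.simple i ∈ Stmt15.DA cs A w :=
            ⟨hS ⟨i, rfl⟩, hi⟩
          rw [hw, Stmt15.DA_one] at hsi
          exact hsi
        · rintro rfl; rfl
      rw [hfil, Finset.sum_singleton, map_one]
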